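/- arXiv:0909.2381 — 2 statements merged into one kernel-verified Lean document; each statement's English description precedes it below -/
import Mathlib

section
/- Let G be a topological group with a base of neighborhoods of the identity consisting of open subgroups (a linear group). A faithfully indexed sequence {a_n} in G converges to the identity if and only if, for every z : ℕ → ℤ and every bijection φ : ℕ → ℕ, the sequence {a_{φ(n)}^{z(n)}} is Cauchy productive. -/
open Filter Topology

def LeftCauchy {G : Type*} [Group G] [TopologicalSpace G] (a : ℕ → G) : Prop :=
  ∀ U ∈ 𝓝 (1 : G), ∃ n : ℕ, ∀ k ≥ n, ∀ l ≥ n, (a k)⁻¹ * a l ∈ U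

def partProd {G : Type*} [Monoid G] (b : ℕ → G) (n : ℕ) : G :=
  ((List.range n).map b).prod

def CauchyProductive {G : Type*} [Group G] [TopologicalSpace G] (b : ℕ → G) : Prop :=
  LeftCauchy (fun n => partProd b (n + 1))

lemma partProd_add {G : Type*} [Monoid G] (b : ℕ → G) (k m : ℕ) :
    partProd b (k + m) = partProd b k * ((List.range m).map (fun i => b (k + i))).prod := by
  unfold partProd
  rw [List.range_add, List.map_append, List.prod_append, List.map_map]
  rfl

lemma seg_mem {G : Type*} [Group G] (b : ℕ → G) (H : Subgroup G) (n : ℕ)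
    (hb : ∀ i > n, b i ∈ H) {k l : ℕ} (hk : k ≥ n) (hkl : k ≤ l) :
    (partProd b (k + 1))⁻¹ * partProd b (l + 1) ∈ H := by
  obtain ⟨m, rfl⟩ := Nat.exists_eq_add_of_le hkl
  have : k + m + 1 = (k + 1) + m := by ring
  rw [this, partProd_add b (k+1) m, ← mul_assoc, inv_mul_cancel, one_mul]
  exact H.list_prod_mem (by
    intro x hx
    simp only [List.mem_map, List.mem_range] at hx
    obtain ⟨i, _, rfl⟩ := hx
    exact hb _ (by omega))

/-- In a linear topological group (open subgroups form a neighborhood base at the identity),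
a faithfully indexed sequence `a` converges to the identity iff for every `z : ℕ → ℤ` and
every bijection `φ : ℕ → ℕ` the sequence `fun n => a (φ n) ^ z n` is Cauchy productive. -/
theorem stmt_11 {G : Type*} [Group G] [TopologicalSpace G] [IsTopologicalGroup G]
    (hlin : ∀ V ∈ 𝓝 (1 : G), ∃ H : Subgroup G, IsOpen (H : Set G) ∧ (H : Set G) ⊆ V)
    (a : ℕ → G) (ha : Function.Injective a) :
    Tendsto a atTop (𝓝 (1 : G)) ↔
      ∀ z : ℕ → ℤ, ∀ φ : ℕ → ℕ, Function.Bijective φ →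
        CauchyProductive (fun n => a (φ n) ^ z n) := by
  constructor
  · intro htend z φ hφ U hU
    obtain ⟨H, hHo, hHU⟩ := hlin U hU
    have hH1 : (H : Set G) ∈ 𝓝 (1 : G) := hHo.mem_nhds H.one_mem
    obtain ⟨N, hN⟩ := (tendsto_atTop' ..).mp htend (H : Set G) hH1
    set e := Equiv.ofBijective φ hφ
    set n₀ := (Finset.range N).sup (fun i => e.symm i) with hn₀
    refine ⟨n₀ + 1, ?_⟩
    have hb : ∀ i > n₀, a (φ i) ^ z i ∈ H := by
      intro i hi
      have hφi : φ i ≥ N := by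
        by_contra h
        push_neg at h
        have : e.symm (φ i) ≤ n₀ :=
          Finset.le_sup (f := fun i => e.symm i) (Finset.mem_range.mpr h)
        have : i ≤ n₀ := by simpa [e] using this
        omega
      exact H.zpow_mem (hN _ hφi) _
    intro k hk l hl
    show (partProd (fun n => a (φ n) ^ z n) (k + 1))⁻¹ *
      partProd (fun n => a (φ n) ^ z n) (l + 1) ∈ U
    apply hHU
    rcases le_total k l with h | h
    · exact seg_mem _ H n₀ hb (by omega) h
    · have := seg_mem (fun n => a (φ n) ^ z n) H n₀ hb (k := l) (l := k) (by omega) h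
      simpa using H.inv_mem this
  · intro hcp
    rw [tendsto_atTop' ..]
    intro U hU
    obtain ⟨H, hHo, hHU⟩ := hlin U hU
    have := hcp (fun _ => 1) id Function.bijective_id (H : Set G)
      (hHo.mem_nhds H.one_mem)
    obtain ⟨n, hn⟩ := this
    refine ⟨n + 1, fun m hm => ?_⟩
    have h := hn (m - 1) (by omega) m (by omega)
    have hm1 : m - 1 + 1 = m := by omega
    simp only [hm1] at h
    rw [partProd_add (fun n => a (id n) ^ (1:ℤ)) m 1] at h
    simp only [List.range_succ, List.range_zero, List.map_cons, List.map_nil, List.prod_cons,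
      List.prod_nil, List.nil_append, mul_one, ← mul_assoc, inv_mul_cancel, one_mul, id,
      zpow_one, add_zero] at h
    exact hHU h
end

section
/- If H is a closed normal subgroup of a topological group G such that both H and the quotient G/H are TAP, then G is TAP. -/
open Filter Topology

def ProdConverges {G : Type*} [Monoid G] [TopologicalSpace G] (b : ℕ → G) : Prop :=
  ∃ x : G, Tendsto (fun n => partProd b (n + 1)) atTop (𝓝 x)

def FOmegaProductiveSet {G : Type*} [Group G] [TopologicalSpace G] (a : ℕ → G) : Prop :=
  Function.Injective a ∧
    ∀ φ : ℕ → ℕ, Function.Bijective φ → ∀ z : ℕ → ℤ,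
      ProdConverges (fun n => a (φ n) ^ z n)

def TAP (G : Type*) [Group G] [TopologicalSpace G] : Prop :=
  ¬ ∃ a : ℕ → G, FOmegaProductiveSet a

lemma partProd_succ {G : Type*} [Monoid G] (b : ℕ → G) (n : ℕ) :
    partProd b (n + 1) = partProd b n * b n := by
  simp [partProd, List.range_succ]

lemma partProd_map {G M : Type*} [Monoid G] [Monoid M] (f : G →* M) (b : ℕ → G) (k : ℕ) :
    partProd (fun n => f (b n)) k = f (partProd b k) := by
  induction k with
  | zero => simp [partProd]
  | succ k ih => rw [partProd_succ, partProd_succ, ih, map_mul]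

lemma partProd_mem {G : Type*} [Group G] (H : Subgroup G) {b : ℕ → G}
    (hb : ∀ n, b n ∈ H) (k : ℕ) : partProd b k ∈ H := by
  induction k with
  | zero => simp [partProd]
  | succ k ih => rw [partProd_succ]; exact H.mul_mem ih (hb k)

/-- Key lemma: signed products of an `f_ω`-productive sequence along any injective map
with infinite co-range converge. -/
lemma key_converges {G : Type*} [Group G] [TopologicalSpace G] {a : ℕ → G}
    (ha : FOmegaProductiveSet a) (σ : ℕ → ℕ) (hσ : Function.Injective σ)
    (hc : (Set.range σ)ᶜ.Infinite) (z : ℕ → ℤ) :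
    ProdConverges (fun n => a (σ n) ^ z n) := by
  classical
  set p : ℕ → Prop := fun n => n ∉ Set.range σ with hp
  have hpin : (setOf p).Infinite := hc
  set ψ : ℕ → ℕ := fun n => if n % 2 = 0 then σ (n / 2) else Nat.nth p (n / 2) with hψ
  set w : ℕ → ℤ := fun n => if n % 2 = 0 then z (n / 2) else 0 with hw
  have hψeven : ∀ k, ψ (2 * k) = σ k := by
    intro k; simp [hψ, Nat.mul_div_cancel_left _ (by norm_num : 0 < 2), Nat.mul_mod_right]
  have hψodd : ∀ k, ψ (2 * k + 1) = Nat.nth p k := by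
    intro k
    have h1 : (2 * k + 1) % 2 = 1 := by omega
    have h2 : (2 * k + 1) / 2 = k := by omega
    simp [hψ, h1, h2]
  have hnth_not : ∀ k, Nat.nth p k ∉ Set.range σ := fun k =>
    Nat.nth_mem_of_infinite hpin k
  have hψbij : Function.Bijective ψ := by
    constructor
    · intro m n hmn
      rcases Nat.even_or_odd m with ⟨i, hi⟩ | ⟨i, hi⟩ <;>
        rcases Nat.even_or_odd n with ⟨j, hj⟩ | ⟨j, hj⟩
      · subst hi hj
        rw [show i + i = 2 * i by ring, show j + j = 2 * j by ring, hψeven, hψeven] at hmn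
        have := hσ hmn; omega
      · subst hi hj
        rw [show i + i = 2 * i by ring, hψeven, hψodd] at hmn
        exact absurd ⟨i, hmn⟩ (hnth_not j)
      · subst hi hj
        rw [show j + j = 2 * j by ring, hψeven, hψodd] at hmn
        exact absurd ⟨j, hmn.symm⟩ (hnth_not i)
      · subst hi hj
        rw [hψodd, hψodd] at hmn
        have := Nat.nth_injective hpin hmn; omega
    · intro n
      by_cases hn : n ∈ Set.range σ
      · obtain ⟨i, hi⟩ := hn
        exact ⟨2 * i, by rw [hψeven]; exact hi⟩
      · refine ⟨2 * Nat.count p n + 1, ?_⟩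
        rw [hψodd]
        exact Nat.nth_count hn
  obtain ⟨x, hx⟩ := ha.2 ψ hψbij w
  set f : ℕ → G := fun n => a (ψ n) ^ w n with hf
  set g : ℕ → G := fun n => a (σ n) ^ z n with hg
  have hfg : ∀ k, partProd f (2 * k) = partProd g k := by
    intro k
    induction k with
    | zero => simp [partProd]
    | succ k ih =>
      have h2 : 2 * (k + 1) = (2 * k + 1) + 1 := by ring
      rw [h2, partProd_succ, partProd_succ, ih, partProd_succ]
      have hfe : f (2 * k) = g k := by
        simp only [hf, hg, hψeven]
        have : w (2 * k) = z k := by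
          simp [hw, Nat.mul_div_cancel_left _ (by norm_num : 0 < 2), Nat.mul_mod_right]
        rw [this]
      have hfo : f (2 * k + 1) = 1 := by
        have : w (2 * k + 1) = 0 := by
          have h1 : (2 * k + 1) % 2 = 1 := by omega
          simp [hw, h1]
        simp [hf, this]
      rw [hfe, hfo, mul_one]
  refine ⟨x, ?_⟩
  have hsub : Tendsto (fun k => partProd f (2 * k + 1 + 1)) atTop (𝓝 x) :=
    hx.comp (tendsto_atTop_atTop_of_monotone (fun a b hab => by omega)
      (fun n => ⟨n, by omega⟩))
  have : ∀ k, partProd f (2 * k + 1 + 1) = partProd g (k + 1) := by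
    intro k
    have : 2 * k + 1 + 1 = 2 * (k + 1) := by ring
    rw [this, hfg]
  simpa [this] using hsub

lemma tendsto_one_of_prod {G : Type*} [Group G] [TopologicalSpace G] [IsTopologicalGroup G]
    {a : ℕ → G} (ha : FOmegaProductiveSet a) : Tendsto a atTop (𝓝 1) := by
  obtain ⟨x, hx⟩ := ha.2 id Function.bijective_id (fun _ => 1)
  set b : ℕ → G := fun n => a (id n) ^ (1 : ℤ) with hb
  have hb' : ∀ n, b n = a n := fun n => by simp [hb]
  have h2 : Tendsto (fun n => partProd b (n + 1 + 1)) atTop (𝓝 x) :=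
    hx.comp (tendsto_add_atTop_nat 1)
  have h3 : Tendsto (fun n => (partProd b (n + 1))⁻¹ * partProd b (n + 1 + 1)) atTop
      (𝓝 (x⁻¹ * x)) := (hx.inv).mul h2
  rw [inv_mul_cancel] at h3
  have h4 : ∀ n, (partProd b (n + 1))⁻¹ * partProd b (n + 1 + 1) = a (n + 1) := by
    intro n
    rw [partProd_succ b (n + 1), hb' (n + 1)]
    group
  rw [show (fun n => (partProd b (n + 1))⁻¹ * partProd b (n + 1 + 1)) =
      (fun n => a (n + 1)) from funext h4] at h3
  rwa [← tendsto_add_atTop_iff_nat 1]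

/-- If `H` is a closed normal subgroup of a topological group `G` such that both `H` and
the quotient `G/H` are TAP, then `G` is TAP. -/
theorem stmt_16 {G : Type*} [Group G] [TopologicalSpace G] [IsTopologicalGroup G]
    (H : Subgroup G) [H.Normal] (hclosed : IsClosed (H : Set G))
    (hH : TAP H) (hQ : TAP (G ⧸ H)) :
    TAP G := by
  classical
  rintro ⟨a, ha⟩
  have : IsClosed (H : Set G) := hclosed
  set π : G →* G ⧸ H := QuotientGroup.mk' H with hπ
  have hπcont : Continuous π := continuous_quot_mk
  set q : ℕ → G ⧸ H := fun n => π (a n) with hq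
  have hqtends : Tendsto q atTop (𝓝 1) := by
    have := (hπcont.tendsto 1).comp (tendsto_one_of_prod ha)
    exact this
  by_cases hrange : (Set.range q).Infinite
  · -- infinitely many distinct values in the quotient: contradict TAP (G ⧸ H)
    set e := hrange.natEmbedding with he
    have hsel : ∀ n, ∃ m, q m = (e n : G ⧸ H) := by
      intro n
      obtain ⟨m, hm⟩ := (e n).2
      exact ⟨m, hm⟩
    choose s hs using hsel
    have hqs_inj : Function.Injective (fun n => q (s n)) := by
      intro m n hmn
      simp only [hs] at hmn
      exact e.injective (Subtype.ext hmn)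
    have hs_inj : Function.Injective s := fun m n hmn => hqs_inj (by simp [hmn])
    set s2 : ℕ → ℕ := fun n => s (2 * n) with hs2
    have hs2_inj : Function.Injective s2 := fun m n hmn => by
      have := hs_inj hmn; omega
    have hcompl : (Set.range s2)ᶜ.Infinite := by
      refine Set.infinite_of_injective_forall_mem (f := fun n => s (2 * n + 1)) ?_ ?_
      · intro m n hmn; have := hs_inj hmn; omega
      · rintro n ⟨m, hm⟩
        have := hs_inj hm; omega
    apply hQ
    refine ⟨fun n => q (s2 n), ?_, ?_⟩
    · intro m n hmn
      have h2 : (fun k => q (s k)) (2 * m) = (fun k => q (s k)) (2 * n) := hmn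
      have := hqs_inj h2
      omega
    · intro φ hφ z
      set σ : ℕ → ℕ := fun n => s2 (φ n) with hσdef
      have hσinj : Function.Injective σ := hs2_inj.comp hφ.1
      have hσrange : Set.range σ = Set.range s2 := by
        ext x
        constructor
        · rintro ⟨n, rfl⟩; exact ⟨φ n, rfl⟩
        · rintro ⟨n, rfl⟩
          obtain ⟨m, hm⟩ := hφ.2 n
          exact ⟨m, by simp [hσdef, hm]⟩
      obtain ⟨x, hx⟩ := key_converges ha σ hσinj (by rw [hσrange]; exact hcompl) z
      refine ⟨π x, ?_⟩
      have heq : (fun n => q (s2 (φ n)) ^ z n) = fun n => π (a (σ n) ^ z n) := by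
        funext n; simp [hq, hσdef, map_zpow]
      rw [heq]
      have : ∀ k, partProd (fun n => π (a (σ n) ^ z n)) (k + 1)
          = π (partProd (fun n => a (σ n) ^ z n) (k + 1)) := fun k =>
        partProd_map π _ (k + 1)
      simp only [this]
      exact (hπcont.tendsto x).comp hx
  · -- finite range: some fiber is infinite, and its value must be 1
    rw [Set.not_infinite] at hrange
    have hfiber : ∃ c, (q ⁻¹' {c}).Infinite := by
      by_contra hcon
      push_neg at hcon
      have : (Set.univ : Set ℕ).Finite := by
        have : (Set.univ : Set ℕ) ⊆ ⋃ c ∈ Set.range q, q ⁻¹' {c} := by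
          intro n _
          simp only [Set.mem_iUnion]
          exact ⟨q n, ⟨n, rfl⟩, rfl⟩
        exact Set.Finite.subset (hrange.biUnion (fun c _ => hcon c)) this
      exact Set.infinite_univ this
    obtain ⟨c, hcinf⟩ := hfiber
    set p : ℕ → Prop := fun n => n ∈ q ⁻¹' {c} with hp
    have hpin : (setOf p).Infinite := hcinf
    set s : ℕ → ℕ := Nat.nth p with hsdef
    have hsmono : StrictMono s := Nat.nth_strictMono hpin
    have hs_inj : Function.Injective s := hsmono.injective
    have hqs : ∀ n, q (s n) = c := fun n => Nat.nth_mem_of_infinite hpin n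
    -- c = 1
    have hc1 : c = 1 := by
      have h1 : Tendsto (fun n => q (s n)) atTop (𝓝 1) :=
        hqtends.comp hsmono.tendsto_atTop
      have h2 : Tendsto (fun _ : ℕ => c) atTop (𝓝 1) := by
        simpa [hqs] using h1
      exact (tendsto_nhds_unique tendsto_const_nhds h2)
    have hmem : ∀ n, a (s n) ∈ H := by
      intro n
      have h1 : q (s n) = 1 := by rw [hqs n, hc1]
      exact (QuotientGroup.eq_one_iff _).mp h1
    set s2 : ℕ → ℕ := fun n => s (2 * n) with hs2
    have hs2_inj : Function.Injective s2 := fun m n hmn => by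
      have := hs_inj hmn; omega
    have hcompl : (Set.range s2)ᶜ.Infinite := by
      refine Set.infinite_of_injective_forall_mem (f := fun n => s (2 * n + 1)) ?_ ?_
      · intro m n hmn; have := hs_inj hmn; omega
      · rintro n ⟨m, hm⟩
        have := hs_inj hm; omega
    apply hH
    refine ⟨fun n => (⟨a (s2 n), hmem (2 * n)⟩ : H), ?_, ?_⟩
    · intro m n hmn
      have : a (s2 m) = a (s2 n) := congrArg Subtype.val hmn
      exact hs2_inj (ha.1 this)
    · intro φ hφ z
      set σ : ℕ → ℕ := fun n => s2 (φ n) with hσdef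
      have hσinj : Function.Injective σ := hs2_inj.comp hφ.1
      have hσrange : Set.range σ = Set.range s2 := by
        ext x
        constructor
        · rintro ⟨n, rfl⟩; exact ⟨φ n, rfl⟩
        · rintro ⟨n, rfl⟩
          obtain ⟨m, hm⟩ := hφ.2 n
          exact ⟨m, by simp [hσdef, hm]⟩
      obtain ⟨x, hx⟩ := key_converges ha σ hσinj (by rw [hσrange]; exact hcompl) z
      set g : ℕ → G := fun n => a (σ n) ^ z n with hg
      have hgmem : ∀ n, g n ∈ H := fun n => H.zpow_mem (hmem (2 * φ n)) (z n)
      have hxmem : x ∈ H := by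
        refine hclosed.mem_of_tendsto hx ?_
        filter_upwards with k
        exact partProd_mem H hgmem (k + 1)
      refine ⟨⟨x, hxmem⟩, ?_⟩
      rw [Topology.IsEmbedding.subtypeVal.tendsto_nhds_iff]
      have hval : ∀ k, (Subtype.val ∘ fun k => partProd
          (fun n => (⟨a (s2 (φ n)), hmem (2 * φ n)⟩ : H) ^ z n) (k + 1)) k
          = partProd g (k + 1) := by
        intro k
        have h1 : Subtype.val (partProd
            (fun n => (⟨a (s2 (φ n)), hmem (2 * φ n)⟩ : H) ^ z n) (k + 1))
            = partProd (fun n =>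
              H.subtype ((⟨a (s2 (φ n)), hmem (2 * φ n)⟩ : H) ^ z n)) (k + 1) :=
          (partProd_map H.subtype
            (fun n => (⟨a (s2 (φ n)), hmem (2 * φ n)⟩ : H) ^ z n) (k + 1)).symm
        have h2 : (fun n => H.subtype ((⟨a (s2 (φ n)), hmem (2 * φ n)⟩ : H) ^ z n)) = g := by
          funext n
          simp [hg, hσdef]
        simp only [Function.comp_apply]
        rw [h1, h2]
      rw [funext hval]
      exact hx
end
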